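/- arXiv:2208.07180 — 3 statements merged into one kernel-verified Lean document; each statement's English description precedes it below -/
import Mathlib

section
/- A hyperproperty H that contains the empty set of traces is a pseudo hyperproperty if and only if for all trace sets T, T ∈ H iff every singleton subset {t} of T is in H, i.e., T ∈ H ↔ ∀ t ∈ T, {t} ∈ H. -/
abbrev Trace (AP : Type) := ℕ → Set AP

def IsPseudoHyperproperty {AP : Type} (H : Set (Set (Trace AP))) : Prop :=
  ∃ P : Set (Trace AP), ∀ T : Set (Trace AP), T ∈ H ↔ ∀ t ∈ T, t ∈ P

theorem pseudo_iff_singleton_characterization {AP : Type} (H : Set (Set (Trace AP)))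
    (hEmpty : (∅ : Set (Trace AP)) ∈ H) :
    IsPseudoHyperproperty H ↔
      ∀ T : Set (Trace AP), T ∈ H ↔ ∀ t ∈ T, ({t} : Set (Trace AP)) ∈ H := by
  constructor
  · rintro ⟨P, hP⟩ T
    rw [hP]
    constructor
    · intro h t ht
      rw [hP]
      simpa using h t ht
    · intro h t ht
      have := h t ht
      rw [hP] at this
      simpa using this
  · intro h
    exact ⟨{t | ({t} : Set (Trace AP)) ∈ H}, fun T => h T⟩
end

section
/- A universal HyperLTL formula φ = ∀π₁...∀πₙ.ψ describes a pseudo hyperproperty if and only if φ is semantically equivalent to its ∀¹ counterpart φ[π] = ∀π.ψ[π₁↦π,...,πₙ↦π], i.e., for all trace sets T, T ⊨ φ ↔ T ⊨ φ[π]. -/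
inductive QF (AP V : Type) : Type
  | atom : AP → V → QF AP V
  | neg : QF AP V → QF AP V
  | conj : QF AP V → QF AP V → QF AP V
  | next : QF AP V → QF AP V
  | untl : QF AP V → QF AP V → QF AP V

def QF.sat {AP V : Type} (A : V → Trace AP) : ℕ → QF AP V → Prop
  | i, .atom a π => a ∈ A π i
  | i, .neg ψ => ¬ QF.sat A i ψ
  | i, .conj ψ₁ ψ₂ => QF.sat A i ψ₁ ∧ QF.sat A i ψ₂
  | i, .next ψ => QF.sat A (i + 1) ψ
  | i, .untl ψ₁ ψ₂ => ∃ j, i ≤ j ∧ QF.sat A j ψ₂ ∧ ∀ k, i ≤ k → k < j → QF.sat A k ψ₁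

def QF.rename {AP V W : Type} (f : V → W) : QF AP V → QF AP W
  | .atom a π => .atom a (f π)
  | .neg ψ => .neg (ψ.rename f)
  | .conj ψ₁ ψ₂ => .conj (ψ₁.rename f) (ψ₂.rename f)
  | .next ψ => .next (ψ.rename f)
  | .untl ψ₁ ψ₂ => .untl (ψ₁.rename f) (ψ₂.rename f)

def satAll {AP V : Type} (T : Set (Trace AP)) (ψ : QF AP V) : Prop :=
  ∀ A : V → Trace AP, (∀ v, A v ∈ T) → ψ.sat A 0


lemma sat_rename {AP V W : Type} (f : V → W) (ψ : QF AP V) :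
    ∀ (A : W → Trace AP) (i : ℕ), (ψ.rename f).sat A i ↔ ψ.sat (A ∘ f) i := by
  induction ψ with
  | atom a π => intro A i; simp [QF.rename, QF.sat, Function.comp]
  | neg ψ ih => intro A i; simp [QF.rename, QF.sat, ih]
  | conj ψ₁ ψ₂ ih₁ ih₂ => intro A i; simp [QF.rename, QF.sat, ih₁, ih₂]
  | next ψ ih => intro A i; simp [QF.rename, QF.sat, ih]
  | untl ψ₁ ψ₂ ih₁ ih₂ => intro A i; simp [QF.rename, QF.sat, ih₁, ih₂]

lemma satAll_singleton {AP V : Type} (ψ : QF AP V) (t : Trace AP) :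
    satAll {t} ψ ↔ ψ.sat (fun _ => t) 0 := by
  constructor
  · intro h; exact h _ (fun v => rfl)
  · intro h A hA
    have : A = fun _ => t := funext fun v => hA v
    rw [this]; exact h

lemma satAll_rename {AP V : Type} (ψ : QF AP V) (T : Set (Trace AP)) :
    satAll T (ψ.rename (fun _ : V => ())) ↔ ∀ t ∈ T, ψ.sat (fun _ => t) 0 := by
  constructor
  · intro h t ht
    have := h (fun _ => t) (fun _ => ht)
    rwa [sat_rename] at this
  · intro h A hA
    rw [sat_rename]
    exact h (A ()) (hA ())

theorem pseudo_iff_forall_one_equivalent {AP V : Type} (ψ : QF AP V) :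
    (∃ P : Set (Trace AP), ∀ T : Set (Trace AP),
        satAll T ψ ↔ ∀ t ∈ T, t ∈ P) ↔
    (∀ T : Set (Trace AP),
        satAll T ψ ↔ satAll T (ψ.rename (fun _ : V => ()))) := by
  constructor
  · rintro ⟨P, hP⟩ T
    have hsingle : ∀ t : Trace AP, ψ.sat (fun _ => t) 0 ↔ t ∈ P := by
      intro t
      rw [← satAll_singleton, hP]
      simp
    rw [hP, satAll_rename]
    exact forall₂_congr fun t _ => (hsingle t).symm
  · intro h
    refine ⟨{t | ψ.sat (fun _ => t) 0}, fun T => ?_⟩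
    rw [h, satAll_rename]
    rfl
end

section
/- Conversely, if a set of traces T satisfies strategy consistency (any two traces agreeing on inputs up to time j agree on outputs up to time j) and T contains a trace for every infinite input sequence, then there exists a strategy σ with T = traces(σ). -/
/-- A trace over atomic propositions `I ⊕ O` (inputs and outputs). -/
abbrev ITrace (I O : Type) := ℕ → Set (I ⊕ O)

/-- A strategy maps (nonempty) finite sequences of input valuations to output valuations. -/
abbrev Strategy (I O : Type) := List (Set I) → Set O

/-- The trace generated by strategy `σ` on the infinite input word `w`:
    `σ_w(k) = w(k) ∪ σ(w(0) ⋯ w(k))`. -/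
def genTrace {I O : Type} (σ : Strategy I O) (w : ℕ → Set I) : ITrace I O :=
  fun k => (Sum.inl '' w k) ∪ (Sum.inr '' σ (((List.range (k + 1)).map w)))

def tracesOf {I O : Type} (σ : Strategy I O) : Set (ITrace I O) :=
  { t | ∃ w : ℕ → Set I, t = genTrace σ w }

def inputsAt {I O : Type} (t : ITrace I O) (k : ℕ) : Set I := { i | Sum.inl i ∈ t k }

def outputsAt {I O : Type} (t : ITrace I O) (k : ℕ) : Set O := { o | Sum.inr o ∈ t k }

lemma trace_decomp {I O : Type} (t : ITrace I O) (k : ℕ) :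
    t k = (Sum.inl '' inputsAt t k) ∪ (Sum.inr '' outputsAt t k) := by
  ext x
  cases x with
  | inl i =>
    simp [inputsAt, outputsAt]
  | inr o =>
    simp [inputsAt, outputsAt]

lemma range_map_getD {I : Type} (w : ℕ → Set I) (k j : ℕ) (hj : j ≤ k) :
    (((List.range (k + 1)).map w).getD j ∅) = w j := by
  rw [List.getD_eq_getElem?_getD, List.getElem?_map, List.getElem?_range (by omega)]
  rfl

theorem consistent_total_trace_set_is_strategy {I O : Type} (T : Set (ITrace I O))
    (hTotal : ∀ w : ℕ → Set I, ∃ t ∈ T, ∀ k, inputsAt t k = w k)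
    (hConsistent : ∀ t ∈ T, ∀ t' ∈ T, ∀ j : ℕ,
      (∀ k ≤ j, inputsAt t k = inputsAt t' k) → ∀ k ≤ j, outputsAt t k = outputsAt t' k) :
    ∃ σ : Strategy I O, T = tracesOf σ := by
  classical
  -- pick a trace for each input word
  choose pick hpickT hpickI using hTotal
  set σ : Strategy I O := fun l => outputsAt (pick (fun k => l.getD k ∅)) (l.length - 1) with hσ
  have hσval : ∀ (w : ℕ → Set I) (k : ℕ) (t : ITrace I O), t ∈ T →
      (∀ j ≤ k, inputsAt t j = w j) →
      σ ((List.range (k + 1)).map w) = outputsAt t k := by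
    intro w k t ht hin
    have hlen : ((List.range (k + 1)).map w).length = k + 1 := by simp
    set w' : ℕ → Set I := fun j => ((List.range (k + 1)).map w).getD j ∅ with hw'
    have hσeq : σ ((List.range (k + 1)).map w) = outputsAt (pick w') k := by
      simp [hσ, hlen, hw']
    rw [hσeq]
    have hagree : ∀ j ≤ k, inputsAt (pick w') j = inputsAt t j := by
      intro j hj
      rw [hpickI w' j, hin j hj, hw']
      exact range_map_getD w k j hj
    exact hConsistent (pick w') (hpickT w') t ht k hagree k le_rfl
  refine ⟨σ, Set.Subset.antisymm ?_ ?_⟩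
  · intro t ht
    refine ⟨inputsAt t, ?_⟩
    funext k
    rw [genTrace, trace_decomp t k, hσval (inputsAt t) k t ht (fun j _ => rfl)]
  · rintro t ⟨w, rfl⟩
    have hmem := hpickT w
    have : genTrace σ w = pick w := by
      funext k
      rw [genTrace, trace_decomp (pick w) k,
        hσval w k (pick w) hmem (fun j _ => hpickI w j), hpickI w k]
    rw [this]; exact hmem
end
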